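/- arXiv:1206.4523 — 3 statements merged into one kernel-verified Lean document; each statement's English description precedes it below -/
import Mathlib

section
/- Let (R, m) be a commutative Noetherian local ring with Krull dimension dim(R) ≤ 1. Then every separated flat R-module is totally separated. -/
open IsLocalRing TensorProduct

universe u v w x

/-- `M` is totally separated if `X ⊗ M` is (m-adically) separated for every
finitely generated `R`-module `X`. -/
def TotallySeparated (R : Type u) [CommRing R] [IsLocalRing R]
    (M : Type v) [AddCommGroup M] [Module R M] : Prop :=
  ∀ (X : Type u) [AddCommGroup X] [Module R X], Module.Finite R X →
    IsHausdorff (maximalIdeal R) (TensorProduct R X M)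

section TotSepAux

open Submodule LinearMap

variable {R : Type u} [CommRing R] {M : Type v} [AddCommGroup M] [Module R M]

lemma TotSep.span_singleton_smul_mem {r : R} {z : M}
    (hz : z ∈ Ideal.span {r} • (⊤ : Submodule R M)) : ∃ u : M, z = r • u := by
  refine Submodule.smul_induction_on hz (fun a ha x _ => ?_) (fun x y hx hy => ?_)
  · rw [Ideal.mem_span_singleton] at ha
    obtain ⟨b, rfl⟩ := ha
    exact ⟨b • x, by rw [mul_smul]⟩
  · obtain ⟨u, rfl⟩ := hx
    obtain ⟨v, rfl⟩ := hy
    exact ⟨u + v, (smul_add r u v).symm⟩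

lemma TotSep.smul_annihilates {I : Ideal R} {σ : R} (hσ : ∀ b ∈ I, σ * b = 0)
    {w : M} (hw : w ∈ I • (⊤ : Submodule R M)) : σ • w = 0 := by
  refine Submodule.smul_induction_on hw (fun b hb x _ => ?_) (fun x y hx hy => ?_)
  · rw [smul_smul, hσ b hb, zero_smul]
  · rw [smul_add, hx, hy, add_zero]

lemma TotSep.mkQ_mem_smul_top_iff {I : Ideal R} {N : Submodule R M} {x : M} :
    N.mkQ x ∈ I • (⊤ : Submodule R (M ⧸ N)) ↔ x ∈ I • (⊤ : Submodule R M) ⊔ N := by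
  have h1 : I • (⊤ : Submodule R (M ⧸ N)) = (I • (⊤ : Submodule R M)).map N.mkQ := by
    rw [Submodule.map_smul'', Submodule.map_top, Submodule.range_mkQ]
  rw [h1]
  constructor
  · intro hx
    rw [Submodule.mem_map] at hx
    obtain ⟨y, hy, hxy⟩ := hx
    have hxyN : x - y ∈ N := by
      rw [← Submodule.Quotient.eq]
      simpa [Submodule.mkQ_apply] using hxy.symm
    have := Submodule.add_mem_sup hy hxyN
    simpa using this
  · intro hx
    rw [Submodule.mem_sup] at hx
    obtain ⟨a, ha, b, hb, rfl⟩ := hx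
    refine ⟨a, ha, ?_⟩
    have hb0 : N.mkQ b = 0 := by
      rw [Submodule.mkQ_apply, Submodule.Quotient.mk_eq_zero]; exact hb
    rw [map_add, hb0, add_zero]

lemma TotSep.isHausdorff_of_linearEquiv {I : Ideal R} {A : Type w} {B : Type x}
    [AddCommGroup A] [Module R A] [AddCommGroup B] [Module R B]
    (e : A ≃ₗ[R] B) (h : IsHausdorff I A) : IsHausdorff I B := by
  constructor
  intro z hz
  have hs : ∀ n : ℕ, e.symm z ∈ (I ^ n • ⊤ : Submodule R A) := by
    intro n
    have hm : z ∈ (I ^ n • ⊤ : Submodule R B) := SModEq.zero.1 (hz n)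
    have hmap : (I ^ n • ⊤ : Submodule R B).map (e.symm : B →ₗ[R] A)
        = (I ^ n • ⊤ : Submodule R A) := by
      rw [Submodule.map_smul'', Submodule.map_top, LinearEquiv.range]
    rw [← hmap]
    exact Submodule.mem_map_of_mem hm
  have h0 : e.symm z = 0 := h.haus _ (fun n => SModEq.zero.2 (hs n))
  have := congrArg e h0
  simpa using this

lemma TotSep.eq_zero_of_subsingleton_left {A : Type w} [AddCommGroup A] [Module R A]
    (h : ∀ a : A, a = 0) (z : A ⊗[R] M) : z = 0 := by
  induction z using TensorProduct.induction_on with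
  | zero => rfl
  | tmul a m => rw [h a, TensorProduct.zero_tmul]
  | add p q hp hq => rw [hp, hq, add_zero]

lemma TotSep.rTensor_smul_id {X : Type w} [AddCommGroup X] [Module R X] (a : R) (z : X ⊗[R] M) :
    ((a • LinearMap.id : X →ₗ[R] X).rTensor M) z = a • z := by
  induction z using TensorProduct.induction_on with
  | zero => simp
  | tmul p q =>
      rw [LinearMap.rTensor_tmul, TensorProduct.smul_tmul']
      rfl
  | add p q hp hq => rw [map_add, hp, hq, smul_add]

lemma TotSep.smul_top_tensor_eq_range {X : Type w} [AddCommGroup X] [Module R X] (I : Ideal R) :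
    (I • ⊤ : Submodule R (X ⊗[R] M)) =
      LinearMap.range ((Submodule.subtype (I • (⊤ : Submodule R X))).rTensor M) := by
  apply le_antisymm
  · rw [Submodule.smul_le]
    intro a ha z _
    set f : X →ₗ[R] ↥(I • (⊤ : Submodule R X)) :=
      (a • LinearMap.id).codRestrict _ (fun x => Submodule.smul_mem_smul ha Submodule.mem_top)
      with hf
    refine ⟨f.rTensor M z, ?_⟩
    rw [← LinearMap.comp_apply, ← LinearMap.rTensor_comp]
    have hcomp : (Submodule.subtype (I • (⊤ : Submodule R X))).comp f = a • LinearMap.id :=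
      LinearMap.subtype_comp_codRestrict _ _ _
    rw [hcomp, TotSep.rTensor_smul_id]
  · have helper : ∀ (xx : X), xx ∈ (I • ⊤ : Submodule R X) → ∀ v : M,
        xx ⊗ₜ[R] v ∈ (I • ⊤ : Submodule R (X ⊗[R] M)) := by
      intro xx hx
      refine Submodule.smul_induction_on hx (fun b hb y _ => fun v => ?_)
        (fun y₁ y₂ h₁ h₂ => fun v => ?_)
      · rw [← TensorProduct.smul_tmul']
        exact Submodule.smul_mem_smul hb Submodule.mem_top
      · rw [TensorProduct.add_tmul]
        exact Submodule.add_mem _ (h₁ v) (h₂ v)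
    rintro z ⟨ξ, rfl⟩
    induction ξ using TensorProduct.induction_on with
    | zero => rw [map_zero]; exact Submodule.zero_mem _
    | tmul q v =>
        rw [LinearMap.rTensor_tmul]
        exact helper (q : X) q.2 v
    | add p q hp hq => rw [map_add]; exact Submodule.add_mem _ hp hq

lemma TotSep.range_rTensor_mono {X : Type w} [AddCommGroup X] [Module R X] {A B : Submodule R X}
    (h : A ≤ B) :
    LinearMap.range ((A.subtype).rTensor M) ≤ LinearMap.range ((B.subtype).rTensor M) := by
  rintro z ⟨ξ, rfl⟩
  refine ⟨(Submodule.inclusion h).rTensor M ξ, ?_⟩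
  rw [← LinearMap.comp_apply, ← LinearMap.rTensor_comp]
  have : B.subtype.comp (Submodule.inclusion h) = A.subtype := by ext y; rfl
  rw [this]

end TotSepAux

section TotSepFlat

open Submodule LinearMap

variable {R : Type u} [CommRing R] {M : Type v} [AddCommGroup M] [Module R M]
  [Module.Flat R M]

lemma TotSep.range_rTensor_inf {X : Type w} [AddCommGroup X] [Module R X]
    (A B : Submodule R X) :
    LinearMap.range ((A.subtype).rTensor M) ⊓ LinearMap.range ((B.subtype).rTensor M) ≤
      LinearMap.range (((A ⊓ B).subtype).rTensor M) := by
  rintro z ⟨⟨α, hα⟩, ⟨β, hβ⟩⟩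
  set f : ↥(A ⊓ B) →ₗ[R] ↥A × ↥B :=
    (Submodule.inclusion inf_le_left).prod (-(Submodule.inclusion inf_le_right)) with hfdef
  set g : ↥A × ↥B →ₗ[R] X :=
    A.subtype.comp (LinearMap.fst R ↥A ↥B) + B.subtype.comp (LinearMap.snd R ↥A ↥B) with hgdef
  have hexact : Function.Exact f g := by
    intro y
    constructor
    · intro hy
      have h1 : (y.1 : X) + (y.2 : X) = 0 := hy
      have hmem : (y.1 : X) ∈ A ⊓ B := by
        refine ⟨y.1.2, ?_⟩
        have h2 : (y.1 : X) = -(y.2 : X) := eq_neg_of_add_eq_zero_left h1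
        rw [h2]
        exact B.neg_mem y.2.2
      refine ⟨⟨(y.1 : X), hmem⟩, ?_⟩
      rw [Prod.ext_iff]
      constructor
      · apply Subtype.ext
        simp [hfdef]
      · apply Subtype.ext
        have h3 : -(y.1 : X) = (y.2 : X) := by
          rw [eq_neg_of_add_eq_zero_left h1, neg_neg]
        simp [hfdef, h3]
    · rintro ⟨w, rfl⟩
      show g (f w) = 0
      simp [hfdef, hgdef]
  have hexact2 := Module.Flat.rTensor_exact M hexact
  set η := (LinearMap.inl R ↥A ↥B).rTensor M α - (LinearMap.inr R ↥A ↥B).rTensor M β with hηdef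
  have hcompAB : ∀ (Y : Type w) [AddCommGroup Y] [Module R Y] (L : ↥A × ↥B →ₗ[R] Y),
      (L.rTensor M) η = ((L.comp (LinearMap.inl R ↥A ↥B)).rTensor M) α
        - ((L.comp (LinearMap.inr R ↥A ↥B)).rTensor M) β := by
    intro Y _ _ L
    rw [hηdef, map_sub, ← LinearMap.comp_apply, ← LinearMap.rTensor_comp,
      ← LinearMap.comp_apply, ← LinearMap.rTensor_comp]
  have hgη : (g.rTensor M) η = 0 := by
    rw [hcompAB X g]
    have e1 : g.comp (LinearMap.inl R ↥A ↥B) = A.subtype := by ext y; simp [hgdef]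
    have e2 : g.comp (LinearMap.inr R ↥A ↥B) = B.subtype := by ext y; simp [hgdef]
    rw [e1, e2, hα, hβ, sub_self]
  obtain ⟨γ, hγ⟩ := (hexact2 η).mp hgη
  have hfst : ((LinearMap.fst R ↥A ↥B).rTensor M) η = α := by
    rw [hcompAB ↥A (LinearMap.fst R ↥A ↥B)]
    have e1 : (LinearMap.fst R ↥A ↥B).comp (LinearMap.inl R ↥A ↥B) = LinearMap.id := by
      ext y; rfl
    have e2 : (LinearMap.fst R ↥A ↥B).comp (LinearMap.inr R ↥A ↥B) = 0 := by
      ext y; rfl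
    rw [e1, e2, LinearMap.rTensor_id, LinearMap.rTensor_zero]
    simp
  have hαγ : α = (Submodule.inclusion (inf_le_left : A ⊓ B ≤ A)).rTensor M γ := by
    rw [← hfst, ← hγ, ← LinearMap.comp_apply, ← LinearMap.rTensor_comp]
    have e3 : (LinearMap.fst R ↥A ↥B).comp f = Submodule.inclusion inf_le_left := by
      ext y; simp [hfdef]
    rw [e3]
  refine ⟨γ, ?_⟩
  rw [← hα, hαγ, ← LinearMap.comp_apply, ← LinearMap.rTensor_comp]
  have e4 : A.subtype.comp (Submodule.inclusion (inf_le_left : A ⊓ B ≤ A))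
      = (A ⊓ B).subtype := by ext y; rfl
  rw [e4]

lemma TotSep.mem_colon_smul_of_flat {I : Ideal R} {r : R} {z : M}
    (hz : r • z ∈ I • (⊤ : Submodule R M)) :
    z ∈ (I.colon (Ideal.span {r})) • (⊤ : Submodule R M) := by
  set C : Ideal R := I.colon (Ideal.span {r}) with hCdef
  set f : ↥C →ₗ[R] R := Submodule.subtype C with hfdef
  set g : R →ₗ[R] R ⧸ (I : Submodule R R) :=
    (Submodule.mkQ (I : Submodule R R)).comp (r • LinearMap.id) with hgdef
  have hexact : Function.Exact f g := by
    intro y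
    constructor
    · intro hy
      have h1 : (I : Submodule R R).mkQ (r • y) = 0 := hy
      rw [Submodule.mkQ_apply, Submodule.Quotient.mk_eq_zero] at h1
      have h2 : y ∈ C := by
        rw [hCdef]
        rw [Ideal.mem_colon_span_singleton]
        rwa [smul_eq_mul, mul_comm] at h1
      exact ⟨⟨y, h2⟩, rfl⟩
    · rintro ⟨w, rfl⟩
      show g (f w) = 0
      have h3 : (w : R) * r ∈ I := Ideal.mem_colon_span_singleton.1 w.2
      rw [hgdef]
      simp only [LinearMap.comp_apply, LinearMap.smul_apply, LinearMap.id_apply,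
        Submodule.mkQ_apply, Submodule.Quotient.mk_eq_zero]
      rwa [smul_eq_mul, mul_comm]
  have hexact2 := Module.Flat.rTensor_exact M hexact
  have key : ∀ y ∈ (I • (⊤ : Submodule R M)),
      ((I : Submodule R R).mkQ 1) ⊗ₜ[R] y = (0 : (R ⧸ (I : Submodule R R)) ⊗[R] M) := by
    intro y hy
    refine Submodule.smul_induction_on hy (fun a ha u _ => ?_) (fun u v hu hv => ?_)
    · rw [← TensorProduct.smul_tmul, ← map_smul, smul_eq_mul, mul_one]
      have ha0 : (I : Submodule R R).mkQ a = 0 := by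
        rw [Submodule.mkQ_apply, Submodule.Quotient.mk_eq_zero]; exact ha
      rw [ha0, TensorProduct.zero_tmul]
    · rw [TensorProduct.tmul_add, hu, hv, add_zero]
  have h0 : (g.rTensor M) ((TensorProduct.lid R M).symm z) = 0 := by
    rw [TensorProduct.lid_symm_apply, LinearMap.rTensor_tmul]
    have hg1 : g 1 = r • ((I : Submodule R R).mkQ 1) := by
      rw [hgdef]
      simp only [LinearMap.comp_apply, LinearMap.smul_apply, LinearMap.id_apply, map_smul]
    rw [hg1, TensorProduct.smul_tmul]
    exact key _ hz
  obtain ⟨ξ, hξ⟩ := (hexact2 _).mp h0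
  have hz2 : z = TensorProduct.lid R M (f.rTensor M ξ) := by
    rw [hξ]
    simp
  rw [hz2]
  clear hz2 hξ h0
  induction ξ using TensorProduct.induction_on with
  | zero => rw [map_zero, map_zero]; exact Submodule.zero_mem _
  | tmul c v =>
      rw [LinearMap.rTensor_tmul]
      have : TensorProduct.lid R M ((f c) ⊗ₜ[R] v) = (c : R) • v := by
        rw [hfdef]; simp [TensorProduct.lid_tmul]
      rw [this]
      exact Submodule.smul_mem_smul c.2 Submodule.mem_top
  | add p q hp hq => rw [map_add, map_add]; exact Submodule.add_mem _ hp hq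

lemma TotSep.smul_top_eq_self (K : Ideal R) : K • (⊤ : Submodule R R) = (K : Submodule R R) := by
  apply le_antisymm
  · rw [Submodule.smul_le]
    intro a ha x _
    rw [smul_eq_mul]
    exact Ideal.mul_mem_right x K ha
  · intro a ha
    have : a • (1 : R) ∈ K • (⊤ : Submodule R R) :=
      Submodule.smul_mem_smul ha Submodule.mem_top
    simpa using this

lemma TotSep.smul_inf_of_flat (I J : Ideal R) :
    (I ⊓ J) • (⊤ : Submodule R M) = I • ⊤ ⊓ J • ⊤ := by
  refine le_antisymm (le_inf (Submodule.smul_mono_left inf_le_left)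
    (Submodule.smul_mono_left inf_le_right)) ?_
  have hmap : ∀ K : Ideal R, (K • (⊤ : Submodule R (R ⊗[R] M))).map
      (TensorProduct.lid R M : R ⊗[R] M →ₗ[R] M) = K • (⊤ : Submodule R M) := by
    intro K
    rw [Submodule.map_smul'', Submodule.map_top]
    congr 1
    exact LinearMap.range_eq_top.2 (TensorProduct.lid R M).surjective
  have hrange : ∀ K : Ideal R, (K • (⊤ : Submodule R (R ⊗[R] M)))
      = LinearMap.range (((K : Submodule R R).subtype).rTensor M) := by
    intro K
    rw [TotSep.smul_top_tensor_eq_range (X := R) K, TotSep.smul_top_eq_self]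
  rintro z ⟨hz1, hz2⟩
  have hmem : ∀ K : Ideal R, z ∈ K • (⊤ : Submodule R M) →
      (TensorProduct.lid R M).symm z ∈ LinearMap.range (((K : Submodule R R).subtype).rTensor M) := by
    intro K hK
    rw [← hrange]
    rw [← hmap K, Submodule.mem_map] at hK
    obtain ⟨w, hw, hwz⟩ := hK
    have : (TensorProduct.lid R M).symm z = w := by
      rw [← hwz]
      simp
    rwa [this]
  have := TotSep.range_rTensor_inf (M := M) (I : Submodule R R) (J : Submodule R R)
    ⟨hmem I hz1, hmem J hz2⟩
  rw [← hrange (I ⊓ J)] at this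
  have h2 : z ∈ ((I ⊓ J) • (⊤ : Submodule R (R ⊗[R] M))).map
      (TensorProduct.lid R M : R ⊗[R] M →ₗ[R] M) := by
    refine ⟨(TensorProduct.lid R M).symm z, this, by simp⟩
  rwa [hmap] at h2

lemma TotSep.range_rTensor_smul_le {X : Type w} [AddCommGroup X] [Module R X]
    (I : Ideal R) (W : Submodule R X) :
    LinearMap.range (((I • W).subtype).rTensor M) ≤
      Submodule.map ((W.subtype).rTensor M) (I • (⊤ : Submodule R (↥W ⊗[R] M))) := by
  have hle : I • W ≤ W := Submodule.smul_le_right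
  have hmem : ∀ y : ↥(I • W), Submodule.inclusion hle y ∈ I • (⊤ : Submodule R ↥W) := by
    intro y
    have hIW : (I • W) = (I • (⊤ : Submodule R ↥W)).map W.subtype := by
      rw [Submodule.map_smul'', Submodule.map_top, Submodule.range_subtype]
    have hy2 : (y : X) ∈ Submodule.map W.subtype (I • (⊤ : Submodule R ↥W)) := by
      rw [← hIW]; exact y.2
    obtain ⟨w, hw, hwy⟩ := Submodule.mem_map.1 hy2
    have : Submodule.inclusion hle y = w := by
      apply Subtype.ext
      rw [Submodule.coe_inclusion]
      exact hwy.symm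
    rwa [this]
  set e' : ↥(I • W) →ₗ[R] ↥(I • (⊤ : Submodule R ↥W)) :=
    (Submodule.inclusion hle).codRestrict _ hmem with he'def
  have hcomp : (I • W).subtype
      = W.subtype.comp ((I • (⊤ : Submodule R ↥W)).subtype.comp e') := by
    ext y; rfl
  rw [hcomp]
  rintro z ⟨ξ, rfl⟩
  rw [LinearMap.rTensor_comp, LinearMap.comp_apply, LinearMap.rTensor_comp, LinearMap.comp_apply]
  refine Submodule.mem_map_of_mem ?_
  rw [TotSep.smul_top_tensor_eq_range (X := ↥W) I]
  exact ⟨e'.rTensor M ξ, rfl⟩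

end TotSepFlat

section TotSepExt

open Submodule LinearMap

variable {R : Type u} [CommRing R] [IsNoetherianRing R] {M : Type v} [AddCommGroup M] [Module R M]
  [Module.Flat R M]

lemma TotSep.ext_hausdorff {X : Type u} [AddCommGroup X] [Module R X] [Module.Finite R X]
    (I : Ideal R) (W : Submodule R X)
    (h1 : IsHausdorff I (↥W ⊗[R] M)) (h2 : IsHausdorff I ((X ⧸ W) ⊗[R] M)) :
    IsHausdorff I (X ⊗[R] M) := by
  constructor
  intro z hz
  replace hz : ∀ n : ℕ, z ∈ (I ^ n • ⊤ : Submodule R (X ⊗[R] M)) :=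
    fun n => SModEq.zero.1 (hz n)
  have hj : Function.Injective ((W.subtype).rTensor M) :=
    Module.Flat.rTensor_preserves_injective_linearMap W.subtype W.injective_subtype
  have hexact : Function.Exact ((W.subtype).rTensor M) ((W.mkQ).rTensor M) :=
    rTensor_exact M (LinearMap.exact_subtype_mkQ W) (Submodule.mkQ_surjective W)
  have hπz : ((W.mkQ).rTensor M) z = 0 := by
    apply h2.haus
    intro n
    rw [SModEq.zero]
    have hmm : ((W.mkQ).rTensor M) z ∈ (I ^ n • ⊤ : Submodule R (X ⊗[R] M)).map
        ((W.mkQ).rTensor M) := Submodule.mem_map_of_mem (hz n)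
    rw [Submodule.map_smul''] at hmm
    exact Submodule.smul_mono le_rfl le_top hmm
  obtain ⟨w, hw⟩ := (hexact z).mp hπz
  obtain ⟨k, hk⟩ := Ideal.exists_pow_inf_eq_pow_smul (R := R) (M := X) I W
  have hAR : ∀ n : ℕ, (I ^ (n + k) • ⊤ : Submodule R X) ⊓ W ≤ I ^ n • W := by
    intro n
    rw [hk (n + k) (Nat.le_add_left k n)]
    have hnk : n + k - k = n := by omega
    rw [hnk]
    exact Submodule.smul_mono le_rfl inf_le_right
  have hwmem : ∀ n : ℕ, w ∈ (I ^ n • ⊤ : Submodule R (↥W ⊗[R] M)) := by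
    intro n
    have hz1 : z ∈ LinearMap.range (((I ^ (n + k) • ⊤ : Submodule R X)).subtype.rTensor M) := by
      rw [← TotSep.smul_top_tensor_eq_range]
      exact hz (n + k)
    have hz2 : z ∈ LinearMap.range ((W.subtype).rTensor M) := ⟨w, hw⟩
    have hz3 := TotSep.range_rTensor_inf (M := M) (I ^ (n + k) • ⊤ : Submodule R X) W ⟨hz1, hz2⟩
    have hz4 := TotSep.range_rTensor_mono (M := M) (hAR n) hz3
    have hz5 := TotSep.range_rTensor_smul_le (M := M) (I ^ n) W hz4
    obtain ⟨w', hw', hww⟩ := hz5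
    have hww' : w' = w := hj (by rw [hww, hw])
    rwa [← hww']
  have hw0 : w = 0 := h1.haus w (fun n => SModEq.zero.2 (hwmem n))
  rw [← hw, hw0, map_zero]

lemma TotSep.hausdorff_of_fg_of_killed (I p : Ideal R)
    (hcyc : ∀ J : Ideal R, p ≤ J → IsHausdorff I ((R ⧸ J) ⊗[R] M)) :
    ∀ (n : ℕ) (X : Type u) [AddCommGroup X] [Module R X] (xg : Fin n → X),
      Submodule.span R (Set.range xg) = ⊤ →
      (∀ a ∈ p, ∀ y : X, a • y = 0) → IsHausdorff I (X ⊗[R] M) := by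
  intro n
  induction n with
  | zero =>
      intro X _ _ xg hxg hp
      constructor
      intro z _
      have hX : ∀ y : X, y = 0 := by
        intro y
        have hy : y ∈ (⊤ : Submodule R X) := Submodule.mem_top
        rw [← hxg] at hy
        have : Set.range xg = (∅ : Set X) := by
          simp [Set.range_eq_empty]
        rw [this, Submodule.span_empty, Submodule.mem_bot] at hy
        exact hy
      exact TotSep.eq_zero_of_subsingleton_left hX z
  | succ n ih =>
      intro X _ _ xg hxg hp
      haveI : Module.Finite R X := ⟨hxg ▸ Submodule.fg_span (Set.finite_range xg)⟩
      set W : Submodule R X := Submodule.span R (Set.range (xg ∘ Fin.castSucc)) with hWdef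
      apply TotSep.ext_hausdorff I W
      · -- Hausdorff (W ⊗ M) via ih
        set xw : Fin n → ↥W := fun i =>
          ⟨xg i.castSucc, Submodule.subset_span ⟨i, rfl⟩⟩ with hxwdef
        apply ih ↥W xw
        · apply Submodule.map_injective_of_injective W.injective_subtype
          rw [Submodule.map_span, Submodule.map_top, Submodule.range_subtype]
          have himg : (⇑W.subtype '' Set.range xw) = Set.range (xg ∘ Fin.castSucc) := by
            ext u
            constructor
            · rintro ⟨_, ⟨i, rfl⟩, rfl⟩
              exact ⟨i, rfl⟩
            · rintro ⟨i, rfl⟩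
              exact ⟨xw i, ⟨i, rfl⟩, rfl⟩
          rw [himg]
        · intro a ha y
          apply Subtype.ext
          exact hp a ha (y : X)
      · -- cyclic quotient
        set gq : X ⧸ W := W.mkQ (xg (Fin.last n)) with hgqdef
        set φ : R →ₗ[R] X ⧸ W := LinearMap.toSpanSingleton R _ gq with hφdef
        have hrange : LinearMap.range φ = Submodule.span R {gq} :=
          (LinearMap.span_singleton_eq_range R _ gq).symm
        have hspan : Submodule.span R {gq} = ⊤ := by
          apply le_antisymm le_top
          have hmaptop : Submodule.map W.mkQ ⊤ = ⊤ := by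
            rw [Submodule.map_top, Submodule.range_mkQ]
          rw [← hmaptop, ← hxg, Submodule.map_span]
          rw [Submodule.span_le]
          rintro _ ⟨_, ⟨i, rfl⟩, rfl⟩
          rcases Fin.eq_castSucc_or_eq_last i with ⟨j, rfl⟩ | rfl
          · have hmem : xg j.castSucc ∈ W := Submodule.subset_span ⟨j, rfl⟩
            have : W.mkQ (xg j.castSucc) = 0 := by
              rw [Submodule.mkQ_apply, Submodule.Quotient.mk_eq_zero]; exact hmem
            rw [this]
            exact Submodule.zero_mem _
          · exact Submodule.subset_span rfl
        have hφsurj : Function.Surjective φ := by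
          rw [← LinearMap.range_eq_top, hrange, hspan]
        have hker : p ≤ LinearMap.ker φ := by
          intro a ha
          rw [LinearMap.mem_ker, hφdef, LinearMap.toSpanSingleton_apply, hgqdef,
            Submodule.mkQ_apply, ← Submodule.Quotient.mk_smul, hp a ha, Submodule.Quotient.mk_eq_zero]
          exact Submodule.zero_mem _
        have e1 : (R ⧸ LinearMap.ker φ) ≃ₗ[R] X ⧸ W := φ.quotKerEquivOfSurjective hφsurj
        exact TotSep.isHausdorff_of_linearEquiv
          (TensorProduct.congr e1 (LinearEquiv.refl R M)) (hcyc (LinearMap.ker φ) hker)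

end TotSepExt

section TotSepCore

open Submodule LinearMap IsLocalRing

variable {R : Type u} [CommRing R] [IsLocalRing R] {M : Type v} [AddCommGroup M] [Module R M]

/-- The key property: `M ⧸ IM` is separated. -/
def TotSep.Core (M : Type v) [AddCommGroup M] [Module R M] (I : Ideal R) : Prop :=
  ∀ z : M, (∀ n : ℕ, z ∈ (maximalIdeal R ^ n • ⊤ ⊔ I • ⊤ : Submodule R M)) →
    z ∈ I • (⊤ : Submodule R M)

lemma TotSep.core_iff_hausdorff (I : Ideal R) :
    TotSep.Core M I ↔ IsHausdorff (maximalIdeal R) (M ⧸ (I • (⊤ : Submodule R M))) := by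
  constructor
  · intro hcore
    constructor
    intro q hq
    obtain ⟨z, rfl⟩ := Submodule.mkQ_surjective _ q
    have hz : ∀ n : ℕ, z ∈ (maximalIdeal R ^ n • ⊤ ⊔ I • ⊤ : Submodule R M) := by
      intro n
      have := SModEq.zero.1 (hq n)
      rwa [TotSep.mkQ_mem_smul_top_iff] at this
    rw [Submodule.mkQ_apply, Submodule.Quotient.mk_eq_zero]
    exact hcore z hz
  · intro hh z hz
    have h0 : (I • (⊤ : Submodule R M)).mkQ z = 0 := by
      apply hh.haus
      intro n
      rw [SModEq.zero, TotSep.mkQ_mem_smul_top_iff]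
      exact hz n
    rwa [Submodule.mkQ_apply, Submodule.Quotient.mk_eq_zero] at h0

lemma TotSep.core_iff_hausdorff_tensor (I : Ideal R) :
    TotSep.Core M I ↔ IsHausdorff (maximalIdeal R) ((R ⧸ I) ⊗[R] M) := by
  rw [TotSep.core_iff_hausdorff]
  constructor
  · exact fun h => TotSep.isHausdorff_of_linearEquiv (quotTensorEquivQuotSMul M I).symm h
  · exact fun h => TotSep.isHausdorff_of_linearEquiv (quotTensorEquivQuotSMul M I) h

lemma TotSep.core_of_radical_maximal [IsNoetherianRing R] (I : Ideal R)
    (hI : maximalIdeal R ≤ I.radical) : TotSep.Core M I := by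
  obtain ⟨c, hc⟩ := Ideal.exists_pow_le_of_le_radical_of_fg hI (IsNoetherian.noetherian _)
  intro z hz
  have hle : (maximalIdeal R ^ c • ⊤ : Submodule R M) ≤ I • ⊤ :=
    Submodule.smul_mono hc le_rfl
  exact sup_le hle le_rfl (hz c)

lemma TotSep.prime_eq_maximal_of_lt (hdim : ringKrullDim R ≤ 1)
    {p q : Ideal R} (hp : p.IsPrime) (hq : q.IsPrime) (hlt : p < q) :
    q = maximalIdeal R := by
  by_contra hne
  have hqm : q < maximalIdeal R :=
    lt_of_le_of_ne (IsLocalRing.le_maximalIdeal hq.ne_top) hne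
  let c : LTSeries (PrimeSpectrum R) := {
    length := 2
    toFun := ![⟨p, hp⟩, ⟨q, hq⟩, ⟨maximalIdeal R, (IsLocalRing.maximalIdeal.isMaximal R).isPrime⟩]
    step := by
      intro i
      fin_cases i
      · exact hlt
      · exact hqm }
  have h2 := Order.LTSeries.length_le_krullDim c
  rw [show c.length = 2 from rfl] at h2
  have h3 : (2 : WithBot ℕ∞) ≤ 1 := le_trans h2 (le_trans le_rfl hdim)
  norm_num at h3

lemma TotSep.minimal_of_prime_ne_max (hdim : ringKrullDim R ≤ 1)
    {p : Ideal R} (hp : p.IsPrime) (hpm : p ≠ maximalIdeal R) :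
    ∀ q : Ideal R, q.IsPrime → q ≤ p → q = p := by
  intro q hq hle
  by_contra hne
  exact hpm (TotSep.prime_eq_maximal_of_lt hdim hq hp (lt_of_le_of_ne hle hne))

end TotSepCore

section TotSepSigma

open Submodule LinearMap IsLocalRing

variable {R : Type u} [CommRing R] [IsNoetherianRing R]

lemma TotSep.exists_sigma {p : Ideal R} (hp : p.IsPrime)
    (hmin : ∀ q : Ideal R, q.IsPrime → q ≤ p → q = p) :
    ∃ σ : R, (∀ b ∈ p, σ * b = 0) ∧ (∀ u : R, u * σ = 0 → u ∈ p) := by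
  classical
  set S := p.primeCompl with hSdef
  set A := Localization p.primeCompl with hAdef
  have hnil : ∀ b ∈ p, algebraMap R A b ∈ nilradical A := by
    intro b hb
    rw [nilradical_eq_sInf]
    refine Ideal.mem_sInf.2 ?_
    intro Q hQ
    haveI hQp : Q.IsPrime := hQ
    have hcle : Q.comap (algebraMap R A) ≤ p := by
      intro u hu
      by_contra hup
      have hunit : IsUnit (algebraMap R A u) :=
        IsLocalization.map_units A (⟨u, hup⟩ : S)
      exact hQp.ne_top (Ideal.eq_top_of_isUnit_mem _ hu hunit)
    have hceq : Q.comap (algebraMap R A) = p :=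
      hmin _ (Ideal.IsPrime.comap _) hcle
    have hmm : b ∈ Q.comap (algebraMap R A) := by rw [hceq]; exact hb
    exact hmm
  haveI : IsNoetherianRing A := IsLocalization.isNoetherianRing S A inferInstance
  obtain ⟨k0, hk0⟩ := IsNoetherianRing.isNilpotent_nilradical A
  have hmapzero : ∀ x ∈ p ^ k0, algebraMap R A x = 0 := by
    intro x hx
    have h1 : algebraMap R A x ∈ (Ideal.map (algebraMap R A) p) ^ k0 := by
      rw [← Ideal.map_pow]
      exact Ideal.mem_map_of_mem _ hx
    have h2 : (Ideal.map (algebraMap R A) p) ^ k0 ≤ (nilradical A) ^ k0 :=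
      Ideal.pow_right_mono (Ideal.map_le_iff_le_comap.2 (fun b hb => Ideal.mem_comap.2 (hnil b hb))) _
    have h3 : ((nilradical A) ^ k0 : Ideal A) = ⊥ := by
      rw [hk0]
      rfl
    have h4 := h2 h1
    rw [h3, Ideal.mem_bot] at h4
    exact h4
  have hkill : ∀ (T : Finset R) (s : R), (∀ t ∈ T, s * t = 0) →
      ∀ x ∈ Ideal.span (T : Set R), s * x = 0 := by
    intro T s hs x hx
    refine Submodule.span_induction (fun t ht => hs t ht) (by rw [mul_zero])
      (fun y z _ _ hy hz => by rw [mul_add, hy, hz, add_zero])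
      (fun a y _ hy => by rw [smul_eq_mul, mul_comm a y, ← mul_assoc, hy, zero_mul]) hx
  set P : ℕ → Prop := fun k => ∃ s : R, s ∈ S ∧ ∀ x ∈ p ^ k, s * x = 0 with hPdef
  have hPex : ∃ k, P k := by
    obtain ⟨T, hT⟩ := IsNoetherian.noetherian (p ^ k0)
    have hkt : ∀ t : R, t ∈ T → ∃ s : S, (s : R) * t = 0 := by
      intro t ht
      have h5 : algebraMap R A t = 0 := by
        apply hmapzero
        rw [← hT]
        exact Submodule.subset_span ht
      exact (IsLocalization.map_eq_zero_iff S A t).mp h5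
    choose F hF using hkt
    refine ⟨k0, ∏ t ∈ T.attach, (F t.1 t.2 : R), ?_, ?_⟩
    · exact Submonoid.prod_mem S (fun t _ => (F t.1 t.2).2)
    · intro x hx
      rw [← hT] at hx
      refine hkill T _ ?_ x hx
      intro t ht
      calc (∏ u ∈ T.attach, (F u.1 u.2 : R)) * t
          = ((F t ht : R) * ∏ u ∈ (T.attach.erase ⟨t, ht⟩), (F u.1 u.2 : R)) * t := by
            rw [← Finset.mul_prod_erase T.attach (fun u => (F u.1 u.2 : R))
              (Finset.mem_attach T ⟨t, ht⟩)]
        _ = (∏ u ∈ (T.attach.erase ⟨t, ht⟩), (F u.1 u.2 : R)) * ((F t ht : R) * t) := by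
            ring
        _ = 0 := by rw [hF t ht, mul_zero]
  have hP0 : ¬ P 0 := by
    rintro ⟨s, hsS, hs⟩
    have h1 : (1 : R) ∈ p ^ 0 := by rw [pow_zero, Ideal.one_eq_top]; trivial
    have h6 := hs 1 h1
    rw [mul_one] at h6
    rw [h6] at hsS
    exact hsS p.zero_mem
  set k1 := Nat.find hPex - 1 with hk1def
  have hkpos : Nat.find hPex ≠ 0 := fun h => hP0 (h ▸ Nat.find_spec hPex)
  have hk01 : Nat.find hPex = k1 + 1 := by omega
  have hnP : ¬ P k1 := Nat.find_min hPex (by omega)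
  obtain ⟨s, hsS, hs⟩ := Nat.find_spec hPex
  obtain ⟨T', hT'⟩ := IsNoetherian.noetherian (p ^ k1)
  have hex : ∃ t ∈ T', ∀ u : R, u * (s * t) = 0 → u ∈ p := by
    by_contra hcon
    push_neg at hcon
    choose U hU1 hU2 using hcon
    apply hnP
    refine ⟨(∏ t ∈ T'.attach, U t.1 t.2) * s, ?_, ?_⟩
    · exact Submonoid.mul_mem S (Submonoid.prod_mem S (fun t _ => hU2 t.1 t.2)) hsS
    · intro x hx
      rw [← hT'] at hx
      refine hkill T' _ ?_ x hx
      intro t ht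
      calc ((∏ u ∈ T'.attach, U u.1 u.2) * s) * t
          = ((U t ht * ∏ u ∈ (T'.attach.erase ⟨t, ht⟩), U u.1 u.2) * s) * t := by
            rw [← Finset.mul_prod_erase T'.attach (fun u => U u.1 u.2)
              (Finset.mem_attach T' ⟨t, ht⟩)]
        _ = (∏ u ∈ (T'.attach.erase ⟨t, ht⟩), U u.1 u.2) * (U t ht * (s * t)) := by
            ring
        _ = 0 := by rw [hU1 t ht, mul_zero]
  obtain ⟨a, haT, ha⟩ := hex
  have hamem : a ∈ p ^ k1 := by
    rw [← hT']
    exact Submodule.subset_span haT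
  refine ⟨s * a, ?_, ?_⟩
  · intro b hb
    have hab : a * b ∈ p ^ (k1 + 1) := by
      rw [pow_succ]
      exact Ideal.mul_mem_mul hamem hb
    rw [← hk01] at hab
    have h0 := hs (a * b) hab
    rw [mul_assoc]
    exact h0
  · intro u hu
    exact ha u hu

end TotSepSigma

section TotSepMinPrime

open Submodule LinearMap IsLocalRing

variable {R : Type u} [CommRing R] [IsLocalRing R] [IsNoetherianRing R]
  {M : Type v} [AddCommGroup M] [Module R M] [Module.Flat R M]
  [IsHausdorff (maximalIdeal R) M]

set_option maxHeartbeats 1000000 in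
lemma TotSep.core_of_minimal_prime (hdim : ringKrullDim R ≤ 1)
    {p : Ideal R} (hp : p.IsPrime) (hpm : p ≠ maximalIdeal R) :
    TotSep.Core M p := by
  obtain ⟨t, htm, htp⟩ : ∃ t ∈ maximalIdeal R, t ∉ p :=
    SetLike.exists_of_lt (lt_of_le_of_ne (IsLocalRing.le_maximalIdeal hp.ne_top) hpm)
  have hrad : maximalIdeal R ≤ (p ⊔ Ideal.span {t}).radical := by
    rw [Ideal.radical_eq_sInf]
    refine le_sInf ?_
    rintro q ⟨hq1, hq2⟩
    have hpq : p ≤ q := le_trans le_sup_left hq1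
    have htq : t ∈ q := hq1 (Submodule.mem_sup_right (Submodule.subset_span rfl))
    have hne : p ≠ q := fun h => htp (h ▸ htq)
    have heq : q = maximalIdeal R :=
      TotSep.prime_eq_maximal_of_lt hdim hp hq2 (lt_of_le_of_ne hpq hne)
    rw [heq]
  obtain ⟨c, hc⟩ := Ideal.exists_pow_le_of_le_radical_of_fg hrad (IsNoetherian.noetherian _)
  have hcn : ∀ n : ℕ, maximalIdeal R ^ (c * n) ≤ p ⊔ Ideal.span {t ^ n} := by
    intro n
    induction n with
    | zero => simp
    | succ n ihn =>
        have hsplit : c * (n + 1) = c * n + c := by ring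
        rw [hsplit, pow_add]
        calc maximalIdeal R ^ (c * n) * maximalIdeal R ^ c
            ≤ (p ⊔ Ideal.span {t ^ n}) * (p ⊔ Ideal.span {t}) := Ideal.mul_mono ihn hc
          _ ≤ p ⊔ Ideal.span {t ^ (n + 1)} := by
              rw [Ideal.sup_mul]
              apply sup_le
              · exact le_trans Ideal.mul_le_left le_sup_left
              · rw [Ideal.mul_sup]
                apply sup_le
                · exact le_trans Ideal.mul_le_right le_sup_left
                · rw [Ideal.span_singleton_mul_span_singleton, ← pow_succ]
                  exact le_sup_right
  obtain ⟨σ, hσ1, hσ2⟩ := TotSep.exists_sigma hp (TotSep.minimal_of_prime_ne_max hdim hp hpm)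
  intro z hz
  have hσz : ∀ n : ℕ, σ • z ∈ (maximalIdeal R ^ n • ⊤ : Submodule R M) := by
    intro n
    have h1 : z ∈ (p • ⊤ ⊔ Ideal.span {t ^ n} • ⊤ : Submodule R M) := by
      have h2 := hz (c * n)
      have h3 : (maximalIdeal R ^ (c * n) • ⊤ : Submodule R M)
          ≤ p • ⊤ ⊔ Ideal.span {t ^ n} • ⊤ := by
        rw [← Submodule.sup_smul]
        exact Submodule.smul_mono (hcn n) le_rfl
      exact sup_le h3 le_sup_left h2
    rw [Submodule.mem_sup] at h1
    obtain ⟨w, hw, v, hv, rfl⟩ := h1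
    obtain ⟨uu, rfl⟩ := TotSep.span_singleton_smul_mem hv
    rw [smul_add, TotSep.smul_annihilates hσ1 hw, zero_add, smul_comm σ (t ^ n)]
    exact Submodule.smul_mem_smul (Ideal.pow_mem_pow htm n) Submodule.mem_top
  have hσz0 : σ • z = 0 :=
    (inferInstance : IsHausdorff (maximalIdeal R) M).haus _
      (fun n => SModEq.zero.2 (hσz n))
  have hcolon := TotSep.mem_colon_smul_of_flat (I := ⊥) (r := σ) (z := z)
    (by rw [hσz0]; exact Submodule.zero_mem _)
  refine Submodule.smul_mono ?_ le_rfl hcolon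
  intro uv huv
  rw [Ideal.mem_colon_span_singleton] at huv
  rw [Ideal.mem_bot] at huv
  exact hσ2 uv huv

end TotSepMinPrime

section TotSepAll

open Submodule LinearMap IsLocalRing

variable {R : Type u} [CommRing R] [IsLocalRing R] [IsNoetherianRing R]
  {M : Type v} [AddCommGroup M] [Module R M] [Module.Flat R M]
  [IsHausdorff (maximalIdeal R) M]

set_option maxHeartbeats 1000000 in
lemma TotSep.core_all (hdim : ringKrullDim R ≤ 1) (I : Ideal R) : TotSep.Core M I := by
  refine IsNoetherian.induction (P := fun I : Ideal R => TotSep.Core M I) ?_ I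
  clear I
  intro I IH
  by_cases hrad : maximalIdeal R ≤ (Ideal.radical I)
  · exact TotSep.core_of_radical_maximal I hrad
  by_cases hsplit : ∃ r : R, r ∉ (Ideal.radical I) ∧ Submodule.colon I (Ideal.span {r}) ≠ I
  · obtain ⟨r, hr1, hr2⟩ := hsplit
    have hmono : Monotone (fun k : ℕ => Submodule.colon I (Ideal.span {r ^ k})) := by
      intro k l hkl x hx
      rw [Ideal.mem_colon_span_singleton] at hx ⊢
      have hxe : x * r ^ l = (x * r ^ k) * r ^ (l - k) := by
        rw [mul_assoc, ← pow_add]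
        congr 2
        omega
      rw [hxe]
      exact Ideal.mul_mem_right _ _ hx
    obtain ⟨e0, he0⟩ := monotone_stabilizes_iff_noetherian.mpr
      (inferInstance : IsNoetherian R R) ⟨fun k => Submodule.colon I (Ideal.span {r ^ k}), hmono⟩
    set e := e0 + 1 with hedef
    have hstab : Submodule.colon I (Ideal.span {r ^ e}) = Submodule.colon I (Ideal.span {r ^ (e + e)}) := by
      have h1 := he0 e (by omega)
      have h2 := he0 (e + e) (by omega)
      exact h1.symm.trans h2
    set J1 := Submodule.colon I (Ideal.span {r ^ e}) with hJ1def
    set J2 := I ⊔ Ideal.span {r ^ e} with hJ2def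
    have hIJ1 : I ≤ J1 :=
      fun x hx => Ideal.mem_colon_span_singleton.2 (Ideal.mul_mem_right _ _ hx)
    have hIJ2 : I ≤ J2 := le_sup_left
    have hcol1 : Submodule.colon I (Ideal.span {r}) ≤ J1 := by
      have h := hmono (show 1 ≤ e by omega)
      simp only [pow_one] at h
      exact h
    have hJ1gt : I < J1 := by
      rcases lt_or_eq_of_le hIJ1 with h | h
      · exact h
      · exact absurd (le_antisymm (h ▸ hcol1)
          (fun x hx => Ideal.mem_colon_span_singleton.2 (Ideal.mul_mem_right _ _ hx))) hr2
    have hJ2gt : I < J2 := by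
      refine lt_of_le_of_ne hIJ2 (fun h => ?_)
      have hre : r ^ e ∈ I := by
        rw [h]
        exact Submodule.mem_sup_right (Submodule.subset_span rfl)
      exact hr1 ⟨e, hre⟩
    have hcap : J1 ⊓ J2 = I := by
      apply le_antisymm
      · rintro x ⟨hx1, hx2⟩
        obtain ⟨i, hi, y, hy, rfl⟩ := Submodule.mem_sup.1 (show x ∈ I ⊔ Ideal.span {r ^ e} from hx2)
        rw [Ideal.mem_span_singleton] at hy
        obtain ⟨b, rfl⟩ := hy
        have h5 : (i + r ^ e * b) * r ^ e ∈ I := Ideal.mem_colon_span_singleton.1 hx1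
        have h6 : b * r ^ (e + e) ∈ I := by
          have heq : b * r ^ (e + e) = (i + r ^ e * b) * r ^ e - i * r ^ e := by
            rw [pow_add]
            ring
          rw [heq]
          exact Submodule.sub_mem _ h5 (Ideal.mul_mem_right _ _ hi)
        have h7 : b ∈ J1 := by
          rw [hstab, Ideal.mem_colon_span_singleton]
          exact h6
        have h8 : r ^ e * b ∈ I := by
          rw [mul_comm]
          exact Ideal.mem_colon_span_singleton.1 h7
        exact Submodule.add_mem _ hi h8
      · exact le_inf hIJ1 hIJ2
    intro z hz
    have hz1 : z ∈ J1 • (⊤ : Submodule R M) :=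
      IH J1 hJ1gt z (fun n => (sup_le_sup le_rfl (Submodule.smul_mono hIJ1 le_rfl) :
        (maximalIdeal R ^ n • ⊤ ⊔ I • ⊤ : Submodule R M) ≤ _) (hz n))
    have hz2 : z ∈ J2 • (⊤ : Submodule R M) :=
      IH J2 hJ2gt z (fun n => (sup_le_sup le_rfl (Submodule.smul_mono hIJ2 le_rfl) :
        (maximalIdeal R ^ n • ⊤ ⊔ I • ⊤ : Submodule R M) ≤ _) (hz n))
    rw [← hcap, TotSep.smul_inf_of_flat]
    exact ⟨hz1, hz2⟩
  · push_neg at hsplit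
    have hPrime : (Ideal.radical I).IsPrime := by
      constructor
      · intro h
        exact hrad (h ▸ le_top)
      · intro a b hab
        by_contra hcon
        push_neg at hcon
        obtain ⟨ha, hb⟩ := hcon
        obtain ⟨n, hn⟩ := hab
        have hbn : b ^ n ∉ (Ideal.radical I) := by
          intro hmem
          obtain ⟨m, hm⟩ := hmem
          exact hb ⟨n * m, by rwa [pow_mul]⟩
        have hcoln := hsplit (b ^ n) hbn
        have h9 : a ^ n ∈ Submodule.colon I (Ideal.span {b ^ n}) := by
          rw [Ideal.mem_colon_span_singleton, ← mul_pow]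
          exact hn
        rw [hcoln] at h9
        exact ha ⟨n, h9⟩
    have hpm : (Ideal.radical I) ≠ maximalIdeal R := fun h => hrad (le_of_eq h.symm)
    obtain ⟨k, hk⟩ := Ideal.exists_radical_pow_le_of_fg I (IsNoetherian.noetherian _)
    have hcyc : ∀ J : Ideal R, (Ideal.radical I) ≤ J →
        IsHausdorff (maximalIdeal R) ((R ⧸ J) ⊗[R] M) := by
      intro J hJ
      rcases eq_or_lt_of_le hJ with heq | hlt
      · rw [← heq]
        exact (TotSep.core_iff_hausdorff_tensor (Ideal.radical I)).1
          (TotSep.core_of_minimal_prime hdim hPrime hpm)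
      · apply (TotSep.core_iff_hausdorff_tensor J).1
        apply TotSep.core_of_radical_maximal
        rw [Ideal.radical_eq_sInf]
        refine le_sInf ?_
        rintro q ⟨hq1, hq2⟩
        rw [TotSep.prime_eq_maximal_of_lt hdim hPrime hq2 (lt_of_lt_of_le hlt hq1)]
    haveI : Module.Finite R (R ⧸ I) :=
      Module.Finite.of_surjective (Submodule.mkQ (I : Submodule R R))
        (Submodule.mkQ_surjective _)
    have hfil : ∀ j : ℕ, IsHausdorff (maximalIdeal R)
        (↥(((Ideal.radical I) ^ (k - j)) • (⊤ : Submodule R (R ⧸ I))) ⊗[R] M) := by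
      intro j
      induction j with
      | zero =>
          have hbot : ((Ideal.radical I) ^ (k - 0)) • (⊤ : Submodule R (R ⧸ I)) = ⊥ := by
            rw [Nat.sub_zero]
            apply le_antisymm ?_ bot_le
            rw [Submodule.smul_le]
            intro a ha y _
            obtain ⟨x, rfl⟩ := Submodule.mkQ_surjective _ y
            have hax : a • x ∈ (I : Submodule R R) := by
              rw [smul_eq_mul]
              exact Ideal.mul_mem_right x I (hk ha)
            rw [Submodule.mem_bot, Submodule.mkQ_apply, ← Submodule.Quotient.mk_smul,
              Submodule.Quotient.mk_eq_zero]
            exact hax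
          rw [hbot]
          constructor
          intro z _
          refine TotSep.eq_zero_of_subsingleton_left (fun y => ?_) z
          exact Subtype.ext ((Submodule.mem_bot R).1 y.2)
      | succ j ihj =>
          set A := ((Ideal.radical I) ^ (k - (j + 1))) • (⊤ : Submodule R (R ⧸ I)) with hAdef
          set B := ((Ideal.radical I) ^ (k - j)) • (⊤ : Submodule R (R ⧸ I)) with hBdef
          have hBA : B ≤ A :=
            Submodule.smul_mono (Ideal.pow_le_pow_right (by omega)) le_rfl
          haveI : Module.Finite R ↥A := Module.Finite.iff_fg.2 (IsNoetherian.noetherian A)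
          apply TotSep.ext_hausdorff (maximalIdeal R) (B.comap A.subtype)
          · letI : AddCommGroup ↥(B.comap A.subtype) := Submodule.addCommGroup _
            exact TotSep.isHausdorff_of_linearEquiv
              (TensorProduct.congr (Submodule.comapSubtypeEquivOfLe hBA).symm
                (LinearEquiv.refl R M)) ihj
          · haveI : Module.Finite R (↥A ⧸ (B.comap A.subtype)) :=
              Module.Finite.of_surjective (B.comap A.subtype).mkQ
                (Submodule.mkQ_surjective _)
            obtain ⟨nq, xq, hxq⟩ :=
              Module.Finite.exists_fin (R := R) (M := ↥A ⧸ (B.comap A.subtype))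
            apply TotSep.hausdorff_of_fg_of_killed (maximalIdeal R) (Ideal.radical I) hcyc nq _ xq hxq
            intro a ha y
            obtain ⟨w, rfl⟩ := Submodule.mkQ_surjective _ y
            rw [← map_smul, Submodule.mkQ_apply, Submodule.Quotient.mk_eq_zero]
            have hw : (w : R ⧸ I) ∈ A := w.2
            have hsm : a • (w : R ⧸ I) ∈ (Ideal.radical I) • A :=
              Submodule.smul_mem_smul ha hw
            have hsm2 : (Ideal.radical I) • A ≤ B := by
              rw [hAdef, ← Submodule.smul_assoc, smul_eq_mul, ← pow_succ']
              exact Submodule.smul_mono (Ideal.pow_le_pow_right (by omega)) le_rfl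
            have hmem : a • (w : R ⧸ I) ∈ B := hsm2 hsm
            show A.subtype (a • w) ∈ B
            rw [map_smul]
            exact hmem
    have htop := hfil k
    have h00 : k - k = 0 := by omega
    rw [h00, pow_zero, Ideal.one_eq_top, Submodule.top_smul] at htop
    have hQI : IsHausdorff (maximalIdeal R) ((R ⧸ I) ⊗[R] M) :=
      TotSep.isHausdorff_of_linearEquiv
        (TensorProduct.congr (Submodule.topEquiv) (LinearEquiv.refl R M)) htop
    exact (TotSep.core_iff_hausdorff_tensor I).2 hQI

end TotSepAll

theorem totallySeparated_of_flat_of_separated_of_dim_le_one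
    (R : Type u) [CommRing R] [IsNoetherianRing R] [IsLocalRing R]
    (hdim : ringKrullDim R ≤ 1)
    (M : Type v) [AddCommGroup M] [Module R M]
    (hflat : Module.Flat R M) [IsHausdorff (maximalIdeal R) M] :
    TotallySeparated R M := by
  haveI := hflat
  intro X _ _ hfin
  obtain ⟨n, xg, hxg⟩ := Module.Finite.exists_fin (R := R) (M := X)
  exact TotSep.hausdorff_of_fg_of_killed (maximalIdeal R) (⊥ : Ideal R)
    (fun J _ => (TotSep.core_iff_hausdorff_tensor J).1 (TotSep.core_all hdim J))
    n X xg hxg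
    (fun a ha y => by rw [(Submodule.mem_bot R).1 ha, zero_smul])
end

section
/- Let (R, m) be a commutative Noetherian local ring and M = ⊕_{i∈I} M_i a direct sum of R-modules such that M is separated and for each i the canonical embedding of M_i into its m-adic completion M̂_i is pure. Then the canonical embedding of M into its m-adic completion M̂ is pure. -/
open IsLocalRing TensorProduct

universe u v w x

/-- A linear map `f : A → B` is pure if `X ⊗ f` is injective for every
finitely generated `R`-module `X`. -/
def IsPureMap {R : Type u} [CommRing R] {A : Type v} {B : Type w}
    [AddCommGroup A] [Module R A] [AddCommGroup B] [Module R B] (f : A →ₗ[R] B) : Prop :=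
  ∀ (X : Type u) [AddCommGroup X] [Module R X], Module.Finite R X →
    Function.Injective (LinearMap.lTensor X f)

/-- A submodule is pure if its inclusion is a pure map. -/
def IsPureSubmodule {R : Type u} [CommRing R] {B : Type v} [AddCommGroup B] [Module R B]
    (A : Submodule R B) : Prop :=
  IsPureMap A.subtype

/-- Naturality of `AdicCompletion.of`. -/
theorem adicCompletion_map_comp_of {R : Type u} [CommRing R] (I : Ideal R)
    {M : Type v} {N : Type x} [AddCommGroup M] [Module R M] [AddCommGroup N] [Module R N]
    (f : M →ₗ[R] N) :
    ((AdicCompletion.map I f).restrictScalars R) ∘ₗ AdicCompletion.of I M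
      = AdicCompletion.of I N ∘ₗ f := by
  ext x
  simp [AdicCompletion.map_val_apply, AdicCompletion.of_apply,
    LinearMap.reduceModIdeal_apply]

open DirectSum in
theorem component_comp_directSumRight {R : Type u} [CommRing R]
    {ι : Type w} [DecidableEq ι] (M : ι → Type v)
    [∀ i, AddCommGroup (M i)] [∀ i, Module R (M i)]
    (X : Type u) [AddCommGroup X] [Module R X] (i : ι) :
    (DirectSum.component R ι (fun j => X ⊗[R] M j) i) ∘ₗ
        (TensorProduct.directSumRight R R X M).toLinearMap
      = LinearMap.lTensor X (DirectSum.component R ι M i) := by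
  ext x j m
  simp only [AlgebraTensorModule.curry_apply, TensorProduct.curry_apply,
    LinearMap.coe_restrictScalars, LinearMap.coe_comp, Function.comp_apply,
    LinearEquiv.coe_coe, LinearMap.lTensor_tmul]
  rw [TensorProduct.directSumRight_tmul_lof]
  by_cases hij : j = i
  · subst hij
    simp [DirectSum.component.lof_self]
  · simp [DirectSum.component.of, hij, dif_neg hij]

open DirectSum in
theorem directSum_pure_in_completion
    (R : Type u) [CommRing R] [IsNoetherianRing R] [IsLocalRing R]
    {ι : Type w} [DecidableEq ι] (M : ι → Type v)
    [∀ i, AddCommGroup (M i)] [∀ i, Module R (M i)]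
    [IsHausdorff (maximalIdeal R) (⨁ i, M i)]
    (h : ∀ i, IsPureMap (AdicCompletion.of (maximalIdeal R) (M i))) :
    IsPureMap (AdicCompletion.of (maximalIdeal R) (⨁ i, M i)) := by
  intro X _ _ hX
  set I := maximalIdeal R
  rw [injective_iff_map_eq_zero]
  intro t ht
  -- For each i, project and use purity of M i
  have key : ∀ i, LinearMap.lTensor X (DirectSum.component R ι M i) t = 0 := by
    intro i
    have hnat := adicCompletion_map_comp_of I (DirectSum.component R ι M i)
    have : LinearMap.lTensor X (AdicCompletion.of I (M i))
        (LinearMap.lTensor X (DirectSum.component R ι M i) t) = 0 := by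
      rw [← LinearMap.comp_apply, ← LinearMap.lTensor_comp, ← hnat,
        LinearMap.lTensor_comp, LinearMap.comp_apply, ht, map_zero]
    exact (h i) X hX this
  -- conclude t = 0 via the direct sum decomposition
  apply (TensorProduct.directSumRight R R X M).injective
  rw [map_zero]
  refine DFinsupp.ext fun i => ?_
  have hc := congrArg (fun (f : _ →ₗ[R] _) => f t) (component_comp_directSumRight M X i)
  simp only [LinearMap.comp_apply] at hc
  exact hc.trans (key i)
end

section
/- Let (R, m) be a complete commutative Noetherian local integral domain and let M = ⊕_{i=1}^∞ R/a_i be a countable direct sum of cyclic modules (a_i ideals of R) which is a faithful R-module, i.e. ⋂_{i=1}^∞ a_i = 0. Then the zero ideal is an associated prime of the m-adic completion M̂, i.e. there exists x ∈ M̂ with Ann_R(x) = 0. -/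
open IsLocalRing TensorProduct

universe u v w x

section Aux

open Submodule

variable {R : Type u} [CommRing R]

lemma aux_smul_top_eq (I : Ideal R) : (I • ⊤ : Submodule R R) = I := by
  rw [smul_eq_mul, Ideal.mul_top]

lemma aux_comap_mkQ_smul_top (b I : Ideal R) :
    comap (mkQ b) (I • ⊤ : Submodule R (R ⧸ b)) = b ⊔ I := by
  have h1 : (I • ⊤ : Submodule R (R ⧸ b)) = map (mkQ b) (I • ⊤ : Submodule R R) := by
    rw [Submodule.map_smul'', Submodule.map_top, Submodule.range_mkQ]
  rw [h1, aux_smul_top_eq, Submodule.comap_map_mkQ, sup_comm]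

lemma aux_mk_mem_smul_top_iff (b I : Ideal R) (r : R) :
    Ideal.Quotient.mk b r ∈ (I • ⊤ : Submodule R (R ⧸ b)) ↔ r ∈ b ⊔ I := by
  rw [← aux_comap_mkQ_smul_top b I, Submodule.mem_comap]
  rfl

lemma aux_iInf_sup_pow_eq [IsNoetherianRing R] [IsLocalRing R] (b : Ideal R) :
    ⨅ n : ℕ, (b ⊔ maximalIdeal R ^ n) = b := by
  have h := Ideal.iInf_pow_smul_eq_bot_of_isLocalRing (I := maximalIdeal R) (M := R ⧸ b)
    (Ideal.IsMaximal.ne_top inferInstance)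
  have : ⨅ n : ℕ, (b ⊔ maximalIdeal R ^ n) =
      comap (mkQ b) (⨅ n : ℕ, (maximalIdeal R ^ n • ⊤ : Submodule R (R ⧸ b))) := by
    rw [Submodule.comap_iInf]
    exact iInf_congr fun n => (aux_comap_mkQ_smul_top b _).symm
  rw [this, h, Submodule.comap_bot, Submodule.ker_mkQ]

lemma aux_iInf_pow [IsNoetherianRing R] [IsLocalRing R] :
    ⨅ n : ℕ, (maximalIdeal R ^ n : Ideal R) = ⊥ := by
  have := aux_iInf_sup_pow_eq (R := R) ⊥
  simpa using this

set_option synthInstance.maxHeartbeats 400000 in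
lemma aux_isArtinian_quotient_pow [IsNoetherianRing R] [IsLocalRing R] (k : ℕ) :
    IsArtinian R (R ⧸ (maximalIdeal R ^ k : Ideal R)) := by
  induction k with
  | zero =>
      haveI : Subsingleton (R ⧸ (maximalIdeal R ^ 0 : Ideal R)) := by
        rw [pow_zero, Ideal.one_eq_top]
        exact Submodule.Quotient.subsingleton_iff.mpr rfl
      haveI : Finite (R ⧸ (maximalIdeal R ^ 0 : Ideal R)) := Finite.of_subsingleton
      exact isArtinian_of_finite
  | succ k ih =>
      set m := maximalIdeal R with hm
      letI : Field (R ⧸ m) := Ideal.Quotient.field m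
      set S : Submodule R R := (m ^ (k+1) : Ideal R) with hS
      set T : Submodule R R := (m ^ k : Ideal R) with hT
      have hST : S ≤ T := Ideal.pow_le_pow_right (Nat.le_succ k)
      set N : Submodule R (R ⧸ S) := T.map S.mkQ with hN
      have e := Submodule.quotientQuotientEquivQuotient S T hST
      have hQ : IsArtinian R ((R ⧸ S) ⧸ N) := e.isArtinian_iff.mpr ih
      have htor : Module.IsTorsionBySet R N (m : Set R) := by
        rintro ⟨x, hx⟩ ⟨r, hr⟩
        obtain ⟨t, ht, rfl⟩ := hx
        apply Subtype.ext
        show r • S.mkQ t = 0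
        rw [Submodule.mkQ_apply, ← Submodule.Quotient.mk_smul, Submodule.Quotient.mk_eq_zero]
        show r • t ∈ S
        have h2 : r * t ∈ m * m ^ k := Ideal.mul_mem_mul hr ht
        rw [← pow_succ'] at h2
        rwa [smul_eq_mul]
      letI : Module (R ⧸ m) N := htor.module
      haveI : IsScalarTower R (R ⧸ m) N := htor.isScalarTower
      haveI : Module.Finite R N := Module.Finite.iff_fg.mpr (IsNoetherian.noetherian N)
      haveI : Module.Finite (R ⧸ m) N := Module.Finite.of_restrictScalars_finite R (R ⧸ m) N
      haveI : IsArtinian (R ⧸ m) N := isArtinian_of_fg_of_artinian'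
      haveI hNart : IsArtinian R N := by
        let F : Submodule R N → Submodule (R ⧸ m) N := fun p =>
          { carrier := p
            add_mem' := fun h1 h2 => p.add_mem h1 h2
            zero_mem' := p.zero_mem
            smul_mem' := by
              intro c x hx
              obtain ⟨r, rfl⟩ := Ideal.Quotient.mk_surjective c
              rw [htor.mk_smul]
              exact p.smul_mem r hx }
        have hF : StrictMono F := fun p q h =>
          SetLike.coe_ssubset_coe.mp (SetLike.coe_ssubset_coe.mpr h)
        exact hF.wellFoundedLT
      exact (isArtinian_iff_submodule_quotient N).mpr ⟨hNart, hQ⟩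

lemma aux_chevalley [IsNoetherianRing R] [IsLocalRing R]
    [IsAdicComplete (maximalIdeal R) R] (J : ℕ → Ideal R) (hJ : Antitone J)
    (hbot : ⨅ n, J n = ⊥) (s : ℕ) : ∃ n, J n ≤ maximalIdeal R ^ s := by
  by_contra hcon
  push_neg at hcon
  set m := maximalIdeal R with hm
  -- stabilization of J n ⊔ m^k in n
  have hstab : ∀ k : ℕ, ∃ c : ℕ, k ≤ c ∧ ∀ n, c ≤ n → J n ⊔ m ^ k = J c ⊔ m ^ k := by
    intro k
    haveI := aux_isArtinian_quotient_pow (R := R) k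
    let f : ℕ →o (Submodule R (R ⧸ (m ^ k : Ideal R)))ᵒᵈ :=
      ⟨fun n => Submodule.map (Submodule.mkQ (m ^ k : Ideal R)) (J n),
       fun n n' h => Submodule.map_mono (hJ h)⟩
    obtain ⟨n₀, hn₀⟩ := IsArtinian.monotone_stabilizes f
    have key : ∀ n n', f n = f n' → J n ⊔ m ^ k = J n' ⊔ m ^ k := by
      intro n n' h
      have h2 : Submodule.comap (Submodule.mkQ (m ^ k : Ideal R))
            (Submodule.map (Submodule.mkQ (m ^ k : Ideal R)) (J n)) =
          Submodule.comap (Submodule.mkQ (m ^ k : Ideal R))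
            (Submodule.map (Submodule.mkQ (m ^ k : Ideal R)) (J n')) :=
        congrArg _ h
      rw [Submodule.comap_map_mkQ, Submodule.comap_map_mkQ] at h2
      rw [sup_comm (J n) (m ^ k), sup_comm (J n') (m ^ k)]
      exact h2
    refine ⟨max n₀ k, le_max_right _ _, fun n hn => ?_⟩
    exact key n (max n₀ k) (((hn₀ n (le_trans (le_max_left _ _) hn)).symm).trans
      (hn₀ (max n₀ k) (le_max_left _ _)))
  choose c hck hcstab using hstab
  set W : ℕ → Ideal R := fun k => J (c k) ⊔ m ^ k with hW
  -- lifting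
  have hlift : ∀ k, ∀ y ∈ W k, ∃ z ∈ W (k+1), y - z ∈ (m ^ k : Ideal R) := by
    intro k y hy
    have h1 : W k = J (max (c k) (c (k+1))) ⊔ m ^ k :=
      (hcstab k _ (le_max_left _ _)).symm
    rw [h1] at hy
    obtain ⟨j, hj, u, hu, rfl⟩ := Submodule.mem_sup.mp hy
    refine ⟨j, Submodule.mem_sup_left (hJ (le_max_right (c k) (c (k+1))) hj), ?_⟩
    simpa using hu
  choose z hz1 hz2 using hlift
  -- start element
  obtain ⟨y₀, hy₀J, hy₀m⟩ := SetLike.not_le_iff_exists.mp (hcon (c s))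
  -- the recursively defined sequence
  let g : (k : ℕ) → {x : R // x ∈ W (s + k)} := fun k =>
    Nat.rec (motive := fun k => {x : R // x ∈ W (s + k)})
      ⟨y₀, Submodule.mem_sup_left hy₀J⟩
      (fun k ih => ⟨z (s + k) ih.1 ih.2, hz1 (s + k) ih.1 ih.2⟩) k
  have hgstep : ∀ k, (g k).1 - (g (k+1)).1 ∈ (m ^ (s + k) : Ideal R) := fun k =>
    hz2 (s + k) (g k).1 (g k).2
  have hchain : ∀ k l, k ≤ l → (g k).1 - (g l).1 ∈ (m ^ (s + k) : Ideal R) := by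
    intro k l hkl
    induction l, hkl using Nat.le_induction with
    | base => simpa using Submodule.zero_mem _
    | succ l hkl ih =>
        have : (g k).1 - (g (l+1)).1 = ((g k).1 - (g l).1) + ((g l).1 - (g (l+1)).1) := by ring
        rw [this]
        exact Submodule.add_mem _ ih
          (Ideal.pow_le_pow_right (by omega) (hgstep l))
  -- completeness
  have hcauchy : ∀ {p q : ℕ}, p ≤ q →
      (fun k => (g k).1) p ≡ (fun k => (g k).1) q [SMOD ((m : Ideal R) ^ p • ⊤ : Submodule R R)] := by
    intro p q hpq
    rw [SModEq.sub_mem, aux_smul_top_eq]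
    exact Ideal.pow_le_pow_right (by omega) (hchain p q hpq)
  obtain ⟨L, hL⟩ := IsPrecomplete.prec inferInstance hcauchy
  have hLmem : ∀ k, L - (g k).1 ∈ (m ^ k : Ideal R) := by
    intro k
    have := (SModEq.sub_mem).mp (hL k)
    rw [aux_smul_top_eq] at this
    simpa using Submodule.neg_mem _ this
  -- L belongs to every J N
  have hLJ : ∀ N, L ∈ J N := by
    intro N
    have : L ∈ ⨅ n : ℕ, (J N ⊔ m ^ n) := by
      rw [Submodule.mem_iInf]
      intro k
      have h1 : L - (g (max k N)).1 ∈ (m ^ k : Ideal R) :=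
        Ideal.pow_le_pow_right (le_max_left _ _) (hLmem (max k N))
      have h2 : (g (max k N)).1 ∈ J N ⊔ m ^ k := by
        have hg := (g (max k N)).2
        have h3 := hck (s + max k N)
        have h4 : N ≤ max k N := le_max_right _ _
        have hle : W (s + max k N) ≤ J N ⊔ m ^ k := by
          apply sup_le
          · exact le_trans (hJ (show N ≤ c (s + max k N) by omega)) le_sup_left
          · exact le_trans (Ideal.pow_le_pow_right
              (show k ≤ s + max k N by have := le_max_left k N; omega)) le_sup_right
        exact hle hg
      have : L = (L - (g (max k N)).1) + (g (max k N)).1 := by ring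
      rw [this]
      exact Submodule.add_mem _ (Submodule.mem_sup_right h1) h2
    rwa [aux_iInf_sup_pow_eq] at this
  have hL0 : L = 0 := by
    have : L ∈ ⨅ n, J n := Submodule.mem_iInf _ |>.mpr hLJ
    rwa [hbot, Submodule.mem_bot] at this
  -- but L is not in m^s
  have h1 : L - y₀ ∈ (m ^ s : Ideal R) := by
    have h2 : L - (g s).1 ∈ (m ^ s : Ideal R) := hLmem s
    have h3 : (g 0).1 - (g s).1 ∈ (m ^ (s + 0) : Ideal R) := hchain 0 s (Nat.zero_le s)
    have h4 : L - y₀ = (L - (g s).1) - ((g 0).1 - (g s).1) := by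
      have : (g 0).1 = y₀ := rfl
      rw [this]; ring
    rw [h4]
    exact Submodule.sub_mem _ h2 (by simpa using h3)
  rw [hL0] at h1
  exact hy₀m (by simpa using Submodule.neg_mem _ h1)

lemma aux_inf_eq_bot [IsDomain R] {I J' : Ideal R} (hI : I ≠ ⊥) (h : I ⊓ J' = ⊥) :
    J' = ⊥ := by
  obtain ⟨x, hxI, hx0⟩ := Submodule.exists_mem_ne_zero_of_ne_bot hI
  rw [eq_bot_iff]
  intro y hy
  have hxy : x * y ∈ I ⊓ J' := ⟨Ideal.mul_mem_right y I hxI, Ideal.mul_mem_left J' x hy⟩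
  rw [h, Submodule.mem_bot] at hxy
  rcases mul_eq_zero.mp hxy with h' | h'
  · exact absurd h' hx0
  · simpa using h'

lemma aux_tail [IsDomain R] (a : ℕ → Ideal R) (h : ⨅ i, a i = ⊥)
    (hne : ∀ i, a i ≠ ⊥) (N : ℕ) : ⨅ i : ℕ, a (N + i) = ⊥ := by
  induction N with
  | zero => simpa using h
  | succ N ih =>
      apply aux_inf_eq_bot (hne N)
      rw [eq_bot_iff, ← ih]
      apply le_iInf
      intro i
      rcases i with _ | j
      · simpa using inf_le_left
      · exact le_trans inf_le_right (by
          exact iInf_le_of_le j (by rw [show N + 1 + j = N + (j + 1) by omega]))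

lemma aux_colon [IsNoetherianRing R] [IsLocalRing R] [IsDomain R]
    [IsAdicComplete (maximalIdeal R) R] (γ : R) (hγ : γ ≠ 0) (t : ℕ) :
    ∃ s : ℕ, ∀ r : R, r * γ ∈ maximalIdeal R ^ s → r ∈ maximalIdeal R ^ t := by
  set m := maximalIdeal R with hm
  set J : ℕ → Ideal R := fun s => (m ^ s).colon (Submodule.span R {γ}) with hJdef
  have hJanti : Antitone J := by
    intro s s' hss'
    exact Submodule.colon_mono (Ideal.pow_le_pow_right hss') le_rfl
  have hJbot : ⨅ s, J s = ⊥ := by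
    rw [eq_bot_iff]
    intro x hx
    rw [Submodule.mem_iInf] at hx
    have : x * γ ∈ ⨅ s : ℕ, (m ^ s : Ideal R) := by
      rw [Submodule.mem_iInf]
      intro s
      have h2 : x ∈ (m ^ s).colon (Submodule.span R {γ}) := hx s
      rw [Submodule.mem_colon_span_singleton, smul_eq_mul] at h2
      exact h2
    rw [aux_iInf_pow, Submodule.mem_bot] at this
    rcases mul_eq_zero.mp this with h' | h'
    · simpa [h'] using Submodule.zero_mem _
    · exact absurd h' hγ
  obtain ⟨s, hs⟩ := aux_chevalley J hJanti hJbot t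
  refine ⟨s, fun r hr => hs ?_⟩
  show r ∈ (m ^ s).colon (Submodule.span R {γ})
  rwa [Submodule.mem_colon_span_singleton, smul_eq_mul]

lemma aux_packet [IsNoetherianRing R] [IsLocalRing R] [IsDomain R]
    [IsAdicComplete (maximalIdeal R) R] (a : ℕ → Ideal R)
    (htail : ∀ N, ⨅ i : ℕ, a (N + i) = ⊥) (hmbot : maximalIdeal R ≠ ⊥) (N t : ℕ) :
    ∃ (γ : R) (L : ℕ), γ ∈ maximalIdeal R ^ t ∧ γ ≠ 0 ∧
      ∀ r : R, (∀ i, N ≤ i → i ≤ N + L → r * γ ∈ a i) → r ∈ maximalIdeal R ^ t := by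
  set m := maximalIdeal R with hm
  obtain ⟨x, hxm, hx0⟩ := Submodule.exists_mem_ne_zero_of_ne_bot hmbot
  have hγm : x ^ t ∈ m ^ t := Ideal.pow_mem_pow hxm t
  have hγ0 : x ^ t ≠ 0 := pow_ne_zero t hx0
  obtain ⟨s, hs⟩ := aux_colon (x ^ t) hγ0 t
  set C : ℕ → Ideal R := fun L => ⨅ i ∈ Finset.range (L + 1), (a (N + i) ⊔ m ^ L) with hC
  have hCanti : Antitone C := by
    intro L L' hLL'
    apply le_iInf₂
    intro i hi
    refine le_trans (iInf₂_le i ?_) ?_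
    · simp only [Finset.mem_range] at hi ⊢; omega
    · exact sup_le_sup_left (Ideal.pow_le_pow_right hLL') _
  have hCbot : ⨅ L, C L = ⊥ := by
    rw [eq_bot_iff]
    intro z hz
    rw [Submodule.mem_iInf] at hz
    have hz2 : ∀ i : ℕ, z ∈ a (N + i) := by
      intro i
      rw [← aux_iInf_sup_pow_eq (a (N + i)), Submodule.mem_iInf]
      intro k
      have h1 := hz (max i k)
      have h2 : C (max i k) ≤ a (N + i) ⊔ m ^ k := by
        refine le_trans (iInf₂_le i ?_) ?_
        · simp only [Finset.mem_range]; omega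
        · exact sup_le_sup_left (Ideal.pow_le_pow_right (le_max_right _ _)) _
      exact h2 h1
    have : z ∈ ⨅ i : ℕ, a (N + i) := Submodule.mem_iInf _ |>.mpr hz2
    rwa [htail N, Submodule.mem_bot] at this
  obtain ⟨L, hL⟩ := aux_chevalley C hCanti hCbot s
  refine ⟨x ^ t, L, hγm, hγ0, fun r hr => ?_⟩
  apply hs
  apply hL
  apply Submodule.mem_iInf _ |>.mpr
  intro i
  apply Submodule.mem_iInf _ |>.mpr
  intro hi
  simp only [Finset.mem_range] at hi
  exact Submodule.mem_sup_left (hr (N + i) (by omega) (by omega))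

end Aux

open DirectSum in
theorem exists_element_with_trivial_annihilator_in_completion
    (R : Type u) [CommRing R] [IsNoetherianRing R] [IsLocalRing R] [IsDomain R]
    [IsAdicComplete (maximalIdeal R) R]
    (a : ℕ → Ideal R) (hfaith : (⨅ i : ℕ, a i) = ⊥) :
    ∃ x : AdicCompletion (maximalIdeal R) (⨁ i : ℕ, R ⧸ a i),
      ∀ r : R, r • x = 0 → r = 0 := by
  classical
  set m : Ideal R := maximalIdeal R with hmdef
  set M : Type u := (⨁ i : ℕ, R ⧸ a i) with hMdef
  -- a common component computation
  have hcomp : ∀ (j : ℕ) (z : M) (n : ℕ), z ∈ ((m ^ n) • ⊤ : Submodule R M) →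
      DirectSum.component R ℕ (fun i => R ⧸ a i) j z ∈
        ((m ^ n) • ⊤ : Submodule R (R ⧸ a j)) := by
    intro j z n hz
    have h2 : Submodule.map (DirectSum.component R ℕ (fun i => R ⧸ a i) j)
        ((m ^ n) • ⊤ : Submodule R M) ≤ (m ^ n) • ⊤ := by
      rw [Submodule.map_smul'']
      exact Submodule.smul_mono le_rfl le_top
    exact h2 (Submodule.mem_map_of_mem hz)
  by_cases hbot : ∃ j, a j = ⊥
  · -- easy case : some a j = 0
    obtain ⟨j, hj⟩ := hbot
    set e : M := DirectSum.of (fun i => R ⧸ a i) j 1 with hedef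
    refine ⟨AdicCompletion.of m M e, ?_⟩
    intro r hr
    have hval : ∀ n, r • e ∈ ((m ^ n) • ⊤ : Submodule R M) := by
      intro n
      have h1 : (r • AdicCompletion.of m M e).val n = (0 : AdicCompletion m M).val n := by
        rw [hr]
      rw [AdicCompletion.val_smul_apply, AdicCompletion.of_apply, AdicCompletion.val_zero_apply,
        Submodule.mkQ_apply, ← Submodule.Quotient.mk_smul, Submodule.Quotient.mk_eq_zero] at h1
      exact h1
    have hval2 : ∀ n, r ∈ (m ^ n : Ideal R) := by
      intro n
      have h3 := hcomp j (r • e) n (hval n)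
      have h4 : DirectSum.component R ℕ (fun i => R ⧸ a i) j (r • e) =
          Ideal.Quotient.mk (a j) r := by
        rw [map_smul, hedef, ← DirectSum.lof_eq_of R, DirectSum.component.of, dif_pos rfl]
        show r • Submodule.Quotient.mk (1 : R) = _
        rw [← Submodule.Quotient.mk_smul, smul_eq_mul, mul_one]
        rfl
      rw [h4, aux_mk_mem_smul_top_iff, hj, bot_sup_eq] at h3
      exact h3
    have : r ∈ ⨅ n : ℕ, (m ^ n : Ideal R) := Submodule.mem_iInf _ |>.mpr hval2
    rwa [aux_iInf_pow, Submodule.mem_bot] at this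
  · -- main case
    push_neg at hbot
    have hmbot : m ≠ ⊥ := by
      intro hm0
      have htop : ∀ i, a i = ⊤ := by
        intro i
        by_contra hne
        exact hbot i (le_bot_iff.mp (hm0 ▸ IsLocalRing.le_maximalIdeal hne))
      rw [iInf_congr htop, iInf_const] at hfaith
      exact top_ne_bot hfaith
    have htail := aux_tail a hfaith hbot
    have hpack := fun (N t : ℕ) =>
      aux_packet a htail hmbot N t
    choose γf Lf hγmem hγne hγprop using hpack
    -- the recursive interval starts
    let Nf : ℕ → ℕ := fun t => Nat.rec 0 (fun t' ih => ih + Lf ih t' + 1) t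
    have hNf : ∀ t, Nf (t + 1) = Nf t + Lf (Nf t) t + 1 := fun t => rfl
    have hNmono : StrictMono Nf := strictMono_nat_of_lt_succ (fun t => by rw [hNf]; omega)
    have hdisj : ∀ t t', t < t' → Nf t + Lf (Nf t) t < Nf t' := by
      intro t t' h
      calc Nf t + Lf (Nf t) t < Nf (t + 1) := by rw [hNf]; omega
      _ ≤ Nf t' := hNmono.monotone h
    -- packets
    let χ : ℕ → M := fun t =>
      ∑ i ∈ Finset.Icc (Nf t) (Nf t + Lf (Nf t) t), DirectSum.of (fun i => R ⧸ a i) i 1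
    let y : ℕ → M := fun n => ∑ t ∈ Finset.range n, γf (Nf t) t • χ t
    have hcauchy : ∀ n, y n ≡ y (n + 1) [SMOD ((m ^ n) • ⊤ : Submodule R M)] := by
      intro n
      rw [SModEq.sub_mem]
      have : y n - y (n + 1) = -(γf (Nf n) n • χ n) := by
        simp only [y, Finset.sum_range_succ]
        abel
      rw [this]
      exact Submodule.neg_mem _ (Submodule.smul_mem_smul (hγmem (Nf n) n) Submodule.mem_top)
    refine ⟨AdicCompletion.mk m M (AdicCompletion.AdicCauchySequence.mk m M y hcauchy), ?_⟩
    intro r hr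
    have hval : ∀ n, r • y n ∈ ((m ^ n) • ⊤ : Submodule R M) := by
      intro n
      have h1 : (r • AdicCompletion.mk m M (AdicCompletion.AdicCauchySequence.mk m M y hcauchy)).val n
          = (0 : AdicCompletion m M).val n := by rw [hr]
      rw [AdicCompletion.val_smul_apply, AdicCompletion.val_zero_apply] at h1
      have h2 : (AdicCompletion.mk m M (AdicCompletion.AdicCauchySequence.mk m M y hcauchy)).val n
          = Submodule.mkQ _ (y n) := rfl
      rw [h2, Submodule.mkQ_apply, ← Submodule.Quotient.mk_smul,
        Submodule.Quotient.mk_eq_zero] at h1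
      exact h1
    -- componentwise : for i in packet t, r * γ_t ∈ a i
    have hkey : ∀ t i, Nf t ≤ i → i ≤ Nf t + Lf (Nf t) t → r * γf (Nf t) t ∈ a i := by
      intro t i hi1 hi2
      rw [← aux_iInf_sup_pow_eq (a i), Submodule.mem_iInf]
      intro k
      set n := max k (t + 1) with hn
      -- component of y n at i
      have hyn : DirectSum.component R ℕ (fun i => R ⧸ a i) i (y n) =
          Ideal.Quotient.mk (a i) (γf (Nf t) t) := by
        rw [map_sum]
        have hterm : ∀ t' ∈ Finset.range n,
            DirectSum.component R ℕ (fun i => R ⧸ a i) i (γf (Nf t') t' • χ t') =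
            if t' = t then Ideal.Quotient.mk (a i) (γf (Nf t) t) else 0 := by
          intro t' _
          rw [map_smul]
          have hχ : DirectSum.component R ℕ (fun i => R ⧸ a i) i (χ t') =
              if t' = t then (1 : R ⧸ a i) else 0 := by
            rw [map_sum]
            by_cases ht' : t' = t
            · subst ht'
              rw [if_pos rfl]
              rw [Finset.sum_eq_single_of_mem i (Finset.mem_Icc.mpr ⟨hi1, hi2⟩)]
              · rw [← DirectSum.lof_eq_of R, DirectSum.component.of, dif_pos rfl]
              · intro i' _ hne
                rw [← DirectSum.lof_eq_of R, DirectSum.component.of, dif_neg hne]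
            · rw [if_neg ht']
              apply Finset.sum_eq_zero
              intro i' hi'
              rw [Finset.mem_Icc] at hi'
              have : i' ≠ i := by
                rcases Nat.lt_or_ge t' t with h | h
                · have := hdisj t' t h
                  omega
                · have ht : t < t' := lt_of_le_of_ne h (fun hh => ht' hh.symm)
                  have := hdisj t t' ht
                  omega
              rw [← DirectSum.lof_eq_of R, DirectSum.component.of, dif_neg this]
          rw [hχ]
          by_cases ht' : t' = t
          · subst ht'
            rw [if_pos rfl, if_pos rfl]
            show γf (Nf t') t' • Submodule.Quotient.mk (1 : R) = _
            rw [← Submodule.Quotient.mk_smul, smul_eq_mul, mul_one]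
            rfl
          · rw [if_neg ht', if_neg ht', smul_zero]
        rw [Finset.sum_congr rfl hterm, Finset.sum_ite_eq' (Finset.range n) t
          (fun _ => Ideal.Quotient.mk (a i) (γf (Nf t) t))]
        rw [if_pos (Finset.mem_range.mpr (by omega))]
      have h3 := hcomp i (r • y n) n (hval n)
      rw [map_smul, hyn] at h3
      have h4 : r • Ideal.Quotient.mk (a i) (γf (Nf t) t) =
          Ideal.Quotient.mk (a i) (r * γf (Nf t) t) := by
        show r • Submodule.Quotient.mk _ = _
        rw [← Submodule.Quotient.mk_smul, smul_eq_mul]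
        rfl
      rw [h4, aux_mk_mem_smul_top_iff] at h3
      have h5 : a i ⊔ m ^ n ≤ a i ⊔ m ^ k :=
        sup_le_sup_left (Ideal.pow_le_pow_right (le_max_left _ _)) _
      exact h5 h3
    have hfin : ∀ t, r ∈ (m ^ t : Ideal R) := by
      intro t
      exact hγprop (Nf t) t r (fun i h1 h2 => hkey t i h1 h2)
    have : r ∈ ⨅ n : ℕ, (m ^ n : Ideal R) := Submodule.mem_iInf _ |>.mpr hfin
    rwa [aux_iInf_pow, Submodule.mem_bot] at this
end
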